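/- Let L be a Lie superalgebra over a field of characteristic ≠ 2 and f : L → L an even linear super-commuting map ([f(x),y] = [x,f(y)] for all x,y). Then for all x, y, u, w, z ∈ L: [[w,z], [u, f([x,y]) − [x, f(y)]]] = 0. -/

import Mathlib

/-- The sign `(-1)^(i*j)` for degrees `i j : ZMod 2`, as an element of the field `F`. -/
def ssign (F : Type*) [Field F] (i j : ZMod 2) : F :=
  if i * j = 1 then -1 else 1

/-- A Lie superalgebra structure on an `F`-module `L`: a bilinear bracket together with a
`ZMod 2`-grading by submodules, such that the bracket is graded, super-skewsymmetric and
satisfies the super Jacobi identity on homogeneous elements. -/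
structure LieSuperAlg (F : Type*) [Field F] (L : Type*) [AddCommGroup L] [Module F L] where
  br : L → L → L
  br_add_left : ∀ x y z : L, br (x + y) z = br x z + br y z
  br_smul_left : ∀ (c : F) (x z : L), br (c • x) z = c • br x z
  br_add_right : ∀ x y z : L, br x (y + z) = br x y + br x z
  br_smul_right : ∀ (c : F) (x z : L), br x (c • z) = c • br x z
  G : ZMod 2 → Submodule F L
  isInternal : DirectSum.IsInternal G
  br_deg : ∀ {i j : ZMod 2} {x y : L}, x ∈ G i → y ∈ G j → br x y ∈ G (i + j)
  super_skew : ∀ {i j : ZMod 2} {x y : L}, x ∈ G i → y ∈ G j →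
    br x y = -(ssign F i j • br y x)
  super_jacobi : ∀ {i j k : ZMod 2} {x y z : L}, x ∈ G i → y ∈ G j → z ∈ G k →
    br x (br y z) = br (br x y) z + ssign F i j • br y (br x z)

variable {F : Type*} [Field F] {L : Type*} [AddCommGroup L] [Module F L]

/-- `δ : L × L → L` is a super-biderivation of degree `τ`. -/
structure IsSuperBiderivation (A : LieSuperAlg F L) (τ : ZMod 2) (δ : L → L → L) : Prop where
  add_left : ∀ x y z : L, δ (x + y) z = δ x z + δ y z
  smul_left : ∀ (c : F) (x z : L), δ (c • x) z = c • δ x z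
  add_right : ∀ x y z : L, δ x (y + z) = δ x y + δ x z
  smul_right : ∀ (c : F) (x z : L), δ x (c • z) = c • δ x z
  deg : ∀ {i j : ZMod 2} {x y : L}, x ∈ A.G i → y ∈ A.G j → δ x y ∈ A.G (i + j + τ)
  skew : ∀ {i j : ZMod 2} {x y : L}, x ∈ A.G i → y ∈ A.G j →
    δ x y = -(ssign F i j • δ y x)
  leibniz : ∀ {i j k : ZMod 2} {x y z : L}, x ∈ A.G i → y ∈ A.G j → z ∈ A.G k →
    δ (A.br x y) z = ssign F τ i • A.br x (δ y z) + ssign F j k • A.br (δ x z) y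

/-- `f : L → L` is an even linear super-commuting map. -/
structure IsSuperCommuting (A : LieSuperAlg F L) (f : L → L) : Prop where
  map_add : ∀ x y : L, f (x + y) = f x + f y
  map_smul : ∀ (c : F) (x : L), f (c • x) = c • f x
  even : ∀ {i : ZMod 2} {x : L}, x ∈ A.G i → f x ∈ A.G i
  comm : ∀ x y : L, A.br (f x) y = A.br x (f y)

/-- `γ : L → L` is a homogeneous element of the centroid `Γ(L)`, of degree `τ`. -/
structure InCentroid (A : LieSuperAlg F L) (τ : ZMod 2) (γ : L → L) : Prop where
  map_add : ∀ x y : L, γ (x + y) = γ x + γ y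
  map_smul : ∀ (c : F) (x : L), γ (c • x) = c • γ x
  deg : ∀ {i : ZMod 2} {x : L}, x ∈ A.G i → γ x ∈ A.G (i + τ)
  centroid : ∀ {i j : ZMod 2} {x y : L}, x ∈ A.G i → y ∈ A.G j →
    γ (A.br x y) = ssign F τ i • A.br x (γ y)

/-- The derived subalgebra `L' = [L, L]`, the span of all brackets. -/
def derived (A : LieSuperAlg F L) : Submodule F L :=
  Submodule.span F {z : L | ∃ x y : L, z = A.br x y}

/-- The center `Z(L)` as a submodule. -/
def centerSub (A : LieSuperAlg F L) : Submodule F L where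
  carrier := {v : L | ∀ x : L, A.br x v = 0}
  add_mem' := by
    intro a b ha hb x
    rw [A.br_add_right, ha x, hb x, add_zero]
  zero_mem' := by
    intro x
    simpa using A.br_smul_right (0 : F) x 0
  smul_mem' := by
    intro c a ha x
    rw [A.br_smul_right, ha x, smul_zero]

namespace Stmt9Aux

lemma zmod2_cases (i : ZMod 2) : i = 0 ∨ i = 1 := by
  have h : ∀ j : ZMod 2, j = 0 ∨ j = 1 := by decide
  exact h i

lemma ssign_sq (i j : ZMod 2) : ssign F i j * ssign F i j = 1 := by
  unfold ssign; split <;> ring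

lemma ssign_comm (i j : ZMod 2) : ssign F i j = ssign F j i := by
  unfold ssign; rw [mul_comm]

lemma ssign_add_left (i j k : ZMod 2) :
    ssign F (i + j) k = ssign F i k * ssign F j k := by
  rcases zmod2_cases i with rfl | rfl <;> rcases zmod2_cases j with rfl | rfl <;>
    rcases zmod2_cases k with rfl | rfl <;>
    simp (config := { decide := true }) [ssign]

lemma ssign_add_right (i j k : ZMod 2) :
    ssign F i (j + k) = ssign F i j * ssign F i k := by
  rcases zmod2_cases i with rfl | rfl <;> rcases zmod2_cases j with rfl | rfl <;>
    rcases zmod2_cases k with rfl | rfl <;>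
    simp (config := { decide := true }) [ssign]

lemma ssign_cycle5 (m k c i j : ZMod 2) :
    ssign F (m+k) (c+i+j) * (ssign F (c+i) (j+m+k) * (ssign F (j+m) (k+c+i) *
      (ssign F (k+c) (i+j+m) * ssign F (i+j) (m+k+c)))) = (1:F) := by
  rcases zmod2_cases m with rfl | rfl <;> rcases zmod2_cases k with rfl | rfl <;>
    rcases zmod2_cases c with rfl | rfl <;> rcases zmod2_cases i with rfl | rfl <;>
    rcases zmod2_cases j with rfl | rfl <;>
    simp (config := { decide := true }) [ssign]

section Main

variable {A : LieSuperAlg F L} {f : L → L}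

/-- `δ x y = [f x, y]`. -/
def dlt (A : LieSuperAlg F L) (f : L → L) (x y : L) : L := A.br (f x) y

/-- `ε x y = f [x,y] − [x, f y]`. -/
def eps (A : LieSuperAlg F L) (f : L → L) (x y : L) : L :=
  f (A.br x y) - A.br x (f y)

lemma f_zero (hf : IsSuperCommuting A f) : f 0 = 0 := by
  have h := hf.map_smul 0 0; simpa using h

lemma br_zero_right (A : LieSuperAlg F L) (x : L) : A.br x 0 = 0 := by
  have h := A.br_smul_right 0 x 0; simpa using h

lemma br_zero_left (A : LieSuperAlg F L) (x : L) : A.br 0 x = 0 := by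
  have h := A.br_smul_left 0 0 x; simpa using h

lemma br_neg_right (A : LieSuperAlg F L) (x w : L) : A.br x (-w) = -A.br x w := by
  rw [← neg_one_smul F w, A.br_smul_right, neg_one_smul]

lemma br_neg_left (A : LieSuperAlg F L) (x w : L) : A.br (-w) x = -A.br w x := by
  rw [← neg_one_smul F w, A.br_smul_left, neg_one_smul]

lemma br_sub_right (A : LieSuperAlg F L) (x a b : L) :
    A.br x (a - b) = A.br x a - A.br x b := by
  rw [sub_eq_add_neg, A.br_add_right, br_neg_right, ← sub_eq_add_neg]

lemma br_sub_left (A : LieSuperAlg F L) (x a b : L) :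
    A.br (a - b) x = A.br a x - A.br b x := by
  rw [sub_eq_add_neg, A.br_add_left, br_neg_left, ← sub_eq_add_neg]

lemma jac' {i j k : ZMod 2} {x y z : L} (hx : x ∈ A.G i) (hy : y ∈ A.G j)
    (hz : z ∈ A.G k) :
    A.br (A.br x y) z = A.br x (A.br y z) - ssign F i j • A.br y (A.br x z) :=
  eq_sub_of_add_eq (A.super_jacobi hx hy hz).symm

lemma dlt_mem (hf : IsSuperCommuting A f) {i j : ZMod 2} {x y : L}
    (hx : x ∈ A.G i) (hy : y ∈ A.G j) : dlt A f x y ∈ A.G (i + j) :=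
  A.br_deg (hf.even hx) hy

lemma eps_mem (hf : IsSuperCommuting A f) {i j : ZMod 2} {x y : L}
    (hx : x ∈ A.G i) (hy : y ∈ A.G j) : eps A f x y ∈ A.G (i + j) :=
  (A.G (i + j)).sub_mem (hf.even (A.br_deg hx hy)) (A.br_deg hx (hf.even hy))

lemma DL (hf : IsSuperCommuting A f) {i j k : ZMod 2} {x y z : L}
    (hx : x ∈ A.G i) (hy : y ∈ A.G j) (hz : z ∈ A.G k) :
    dlt A f (A.br x y) z
      = A.br x (dlt A f y z) - ssign F i j • A.br y (dlt A f x z) := by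
  unfold dlt
  rw [hf.comm (A.br x y) z, jac' hx hy (hf.even hz), ← hf.comm y z, ← hf.comm x z]

lemma DR (hf : IsSuperCommuting A f) {i j k : ZMod 2} {x y z : L}
    (hx : x ∈ A.G i) (hy : y ∈ A.G j) (hz : z ∈ A.G k) :
    dlt A f x (A.br y z)
      = A.br (dlt A f x y) z + ssign F i j • A.br y (dlt A f x z) := by
  unfold dlt
  exact A.super_jacobi (hf.even hx) hy hz

lemma dlt_skew (hf : IsSuperCommuting A f) {i j : ZMod 2} {x y : L}
    (hx : x ∈ A.G i) (hy : y ∈ A.G j) :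
    dlt A f x y = -(ssign F i j • dlt A f y x) := by
  unfold dlt
  rw [A.super_skew (hf.even hx) hy, ← hf.comm y x]

lemma phirel (hf : IsSuperCommuting A f) {i j c d : ZMod 2} {x y u v : L}
    (hx : x ∈ A.G i) (hy : y ∈ A.G j) (hu : u ∈ A.G c) (hv : v ∈ A.G d) :
    ssign F c j • (A.br (dlt A f x y) (A.br u v) - A.br (A.br x y) (dlt A f u v))
      = (ssign F i c * ssign F i j) •
        (A.br (dlt A f u y) (A.br x v) - A.br (A.br u y) (dlt A f x v)) := by
  have e2 := DR hf hu hy hv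
  have e3 := DR hf hx hy hv
  have e5 := DL hf hx hu hy
  have e6 := DL hf hx hu hv
  have e1 := DL hf hx hu (A.br_deg hy hv)
  have e4 := DR hf (A.br_deg hx hu) hy hv
  rw [ssign_add_left] at e4
  have hE1 : dlt A f (A.br x u) (A.br y v)
      = A.br x (A.br (dlt A f u y) v) + ssign F c j • A.br x (A.br y (dlt A f u v))
        - ssign F i c • A.br u (A.br (dlt A f x y) v)
        - (ssign F i c * ssign F i j) • A.br u (A.br y (dlt A f x v)) := by
    rw [e1, e2, e3]
    simp only [A.br_add_right, A.br_smul_right]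
    module
  have hE4 : dlt A f (A.br x u) (A.br y v)
      = A.br (A.br x (dlt A f u y)) v - ssign F i c • A.br (A.br u (dlt A f x y)) v
        + (ssign F i j * ssign F c j) • A.br y (A.br x (dlt A f u v))
        - (ssign F i j * ssign F c j * ssign F i c) • A.br y (A.br u (dlt A f x v)) := by
    rw [e4, e5, e6]
    simp only [br_sub_left, A.br_smul_left, br_sub_right, A.br_smul_right]
    module
  have j1 := A.super_jacobi hx (dlt_mem hf hu hy) hv
  rw [ssign_add_right] at j1
  have j2 := A.super_jacobi hx hy (dlt_mem hf hu hv)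
  have j3 := A.super_jacobi hu (dlt_mem hf hx hy) hv
  rw [ssign_add_right, ssign_comm c i] at j3
  have j4 := A.super_jacobi hu hy (dlt_mem hf hx hv)
  have hsq1 : (ssign F i c * ssign F i c) • A.br (dlt A f x y) (A.br u v)
      = A.br (dlt A f x y) (A.br u v) := by rw [ssign_sq, one_smul]
  linear_combination (norm := module) hE1 - hE4 + j1 + (ssign F c j) • j2
    - (ssign F i c) • j3 - (ssign F i c * ssign F i j) • j4 - (ssign F c j) • hsq1


lemma rel1 (hf : IsSuperCommuting A f) {i j c d : ZMod 2} {x y u v : L}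
    (hx : x ∈ A.G i) (hy : y ∈ A.G j) (hu : u ∈ A.G c) (hv : v ∈ A.G d) :
    A.br (dlt A f x y) (A.br u v) - A.br (A.br x y) (dlt A f u v)
      = (ssign F c j * (ssign F i c * ssign F i j)) •
        (A.br (dlt A f u y) (A.br x v) - A.br (A.br u y) (dlt A f x v)) := by
  have h := congrArg (fun t => ssign F c j • t) (phirel hf hx hy hu hv)
  simp only [smul_smul] at h
  rw [ssign_sq, one_smul] at h
  exact h

lemma rel2 (hf : IsSuperCommuting A f) {i j c d : ZMod 2} {x y u v : L}
    (hx : x ∈ A.G i) (hy : y ∈ A.G j) (hu : u ∈ A.G c) (hv : v ∈ A.G d) :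
    A.br (dlt A f x y) (A.br u v) - A.br (A.br x y) (dlt A f u v)
      = -(ssign F c d •
        (A.br (dlt A f x y) (A.br v u) - A.br (A.br x y) (dlt A f v u))) := by
  rw [A.super_skew hu hv, dlt_skew hf hu hv]
  simp only [br_neg_right, A.br_smul_right]
  module

lemma phi_zero (h2 : (2 : F) ≠ 0) (hf : IsSuperCommuting A f)
    {i j c d : ZMod 2} {x y u v : L}
    (hx : x ∈ A.G i) (hy : y ∈ A.G j) (hu : u ∈ A.G c) (hv : v ∈ A.G d) :
    A.br (dlt A f x y) (A.br u v) = A.br (A.br x y) (dlt A f u v) := by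
  have c1 := rel1 hf hx hy hu hv
  have c2 := rel2 hf hu hy hx hv
  have c3 := rel1 hf hu hy hv hx
  have c4 := rel2 hf hv hy hu hx
  have c5 := rel1 hf hv hy hx hu
  have c6 := rel2 hf hx hy hv hu
  have hchain : A.br (dlt A f x y) (A.br u v) - A.br (A.br x y) (dlt A f u v)
      = -(((ssign F c j * (ssign F i c * ssign F i j)) * (ssign F i d *
          ((ssign F d j * (ssign F c d * ssign F c j)) * (ssign F c i *
          ((ssign F i j * (ssign F d i * ssign F d j)) * ssign F d c))))) •
        (A.br (dlt A f x y) (A.br u v) - A.br (A.br x y) (dlt A f u v))) := by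
    calc A.br (dlt A f x y) (A.br u v) - A.br (A.br x y) (dlt A f u v)
        = _ := c1
      _ = _ := by rw [c2]
      _ = _ := by rw [c3]
      _ = _ := by rw [c4]
      _ = _ := by rw [c5]
      _ = _ := by rw [c6]
      _ = _ := by module
  have hsc : ((ssign F c j * (ssign F i c * ssign F i j)) * (ssign F i d *
          ((ssign F d j * (ssign F c d * ssign F c j)) * (ssign F c i *
          ((ssign F i j * (ssign F d i * ssign F d j)) * ssign F d c))))) = (1:F) := by
    rw [ssign_comm c i, ssign_comm d i, ssign_comm d c]
    ring_nf
    simp [pow_two, ssign_sq]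
  rw [hsc, one_smul] at hchain
  have hz : A.br (dlt A f x y) (A.br u v) - A.br (A.br x y) (dlt A f u v) = 0 := by
    have h2s : (2:F) • (A.br (dlt A f x y) (A.br u v)
        - A.br (A.br x y) (dlt A f u v)) = 0 := by
      rw [two_smul]
      nth_rewrite 1 [hchain]
      exact neg_add_cancel _
    rcases smul_eq_zero.mp h2s with h | h
    · exact absurd h h2
    · exact h
  exact sub_eq_zero.mp hz


lemma g4 (h2 : (2 : F) ≠ 0) (hf : IsSuperCommuting A f)
    {m k c i j : ZMod 2} {w z u x y : L}
    (hw : w ∈ A.G m) (hz : z ∈ A.G k) (hu : u ∈ A.G c)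
    (hx : x ∈ A.G i) (hy : y ∈ A.G j) :
    A.br (A.br w z) (A.br u (eps A f x y))
      = -(A.br (A.br (eps A f w z) u) (A.br x y)) := by
  have h1 : A.br u (eps A f x y)
      = dlt A f u (A.br x y) - A.br u (dlt A f x y) := by
    unfold eps dlt
    rw [br_sub_right, ← hf.comm u (A.br x y), ← hf.comm x y]
  have hA : A.br (A.br w z) (A.br u (eps A f x y))
      = A.br (A.br w z) (dlt A f u (A.br x y))
        - A.br (A.br w z) (A.br u (dlt A f x y)) := by
    rw [h1, br_sub_right]
  have hBLa := phi_zero h2 hf hw hz hu (A.br_deg hx hy)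
  have hjac1 := A.super_jacobi (A.br_deg hw hz) hu (dlt_mem hf hx hy)
  have hBLb := phi_zero h2 hf hw hz hx hy
  have hBLc := phi_zero h2 hf (A.br_deg hw hz) hu hx hy
  have hjac2 := A.super_jacobi (dlt_mem hf hw hz) hu (A.br_deg hx hy)
  have hC : A.br u (A.br (dlt A f w z) (A.br x y))
      = A.br u (A.br (A.br w z) (dlt A f x y)) := by rw [hBLb]
  have hd : A.br (dlt A f w z) u
      = dlt A f (A.br w z) u - A.br (eps A f w z) u := by
    unfold dlt eps
    rw [br_sub_left, hf.comm w z]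
    abel
  have hB : A.br (A.br (dlt A f w z) u) (A.br x y)
      = A.br (dlt A f (A.br w z) u) (A.br x y)
        - A.br (A.br (eps A f w z) u) (A.br x y) := by
    rw [hd, br_sub_left]
  linear_combination (norm := module) hA - hBLa + hjac2
    + (ssign F (m+k) c) • hC - hjac1 + hB + hBLc

lemma epsA (hf : IsSuperCommuting A f) {i j k : ZMod 2} {x y z : L}
    (hx : x ∈ A.G i) (hy : y ∈ A.G j) (hz : z ∈ A.G k) :
    A.br (eps A f x y) z = ssign F i j • A.br y (eps A f x z) := by
  have t1 : A.br (f (A.br x y)) z = A.br (A.br x y) (f z) := hf.comm _ _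
  have t2 := jac' hx hy (hf.even hz)
  have t3 : A.br x (A.br y (f z)) = A.br x (A.br (f y) z) := by
    rw [hf.comm y z]
  have t4 := jac' hx (hf.even hy) hz
  have t5 : A.br (f y) (A.br x z) = A.br y (f (A.br x z)) := hf.comm _ _
  unfold eps
  rw [br_sub_left, br_sub_right]
  linear_combination (norm := module) t1 + t2 + t3 - t4 + (ssign F i j) • t5

lemma eps_skew (hf : IsSuperCommuting A f) {i j : ZMod 2} {x y : L}
    (hx : x ∈ A.G i) (hy : y ∈ A.G j) :
    eps A f x y = -(ssign F i j • eps A f y x) := by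
  unfold eps
  rw [A.super_skew hx hy, A.super_skew hx (hf.even hy), ← hf.comm y x,
    show f (-(ssign F i j • A.br y x)) = -(ssign F i j • f (A.br y x)) from by
      rw [← neg_smul, hf.map_smul, neg_smul]]
  module

lemma epsB (hf : IsSuperCommuting A f) {i j k : ZMod 2} {x y z : L}
    (hx : x ∈ A.G i) (hy : y ∈ A.G j) (hz : z ∈ A.G k) :
    A.br (eps A f x y) z = -(A.br x (eps A f y z)) := by
  rw [eps_skew hf hx hy, br_neg_left, A.br_smul_left, epsA hf hy hx hz,
    smul_smul,
    show ssign F i j * ssign F j i = (1:F) from by rw [ssign_comm j i]; exact ssign_sq i j,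
    one_smul]

lemma rot (h2 : (2 : F) ≠ 0) (hf : IsSuperCommuting A f)
    {m k c i j : ZMod 2} {a b cc d e : L}
    (ha : a ∈ A.G m) (hb : b ∈ A.G k) (hc : cc ∈ A.G c)
    (hd : d ∈ A.G i) (he : e ∈ A.G j) :
    A.br (A.br a b) (A.br cc (eps A f d e))
      = -(ssign F (m+k) (c+i+j) • A.br (A.br cc d) (A.br e (eps A f a b))) := by
  have s1 : A.br cc (eps A f d e) = -(A.br (eps A f cc d) e) := by
    rw [epsB hf hc hd he, neg_neg]
  have s2 := A.super_skew (A.br_deg ha hb) (A.br_deg (eps_mem hf hc hd) he)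
  have s3 := g4 h2 hf hc hd he ha hb
  have s3' : A.br (A.br (eps A f cc d) e) (A.br a b)
      = -(A.br (A.br cc d) (A.br e (eps A f a b))) := by rw [s3, neg_neg]
  rw [s1, br_neg_right, s2, s3']
  module


lemma keyP (h2 : (2 : F) ≠ 0) (hf : IsSuperCommuting A f)
    {m k c i j : ZMod 2} {w z u x y : L}
    (hw : w ∈ A.G m) (hz : z ∈ A.G k) (hu : u ∈ A.G c)
    (hx : x ∈ A.G i) (hy : y ∈ A.G j) :
    A.br (A.br w z) (A.br u (eps A f x y)) = 0 := by
  have r1 := rot h2 hf hw hz hu hx hy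
  have r2 := rot h2 hf hu hx hy hw hz
  have r3 := rot h2 hf hy hw hz hu hx
  have r4 := rot h2 hf hz hu hx hy hw
  have r5 := rot h2 hf hx hy hw hz hu
  have hchain : A.br (A.br w z) (A.br u (eps A f x y))
      = -((ssign F (m+k) (c+i+j) * (ssign F (c+i) (j+m+k) * (ssign F (j+m) (k+c+i) *
          (ssign F (k+c) (i+j+m) * ssign F (i+j) (m+k+c))))) •
            A.br (A.br w z) (A.br u (eps A f x y))) := by
    calc A.br (A.br w z) (A.br u (eps A f x y))
        = _ := r1
      _ = _ := by rw [r2]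
      _ = _ := by rw [r3]
      _ = _ := by rw [r4]
      _ = _ := by rw [r5]
      _ = _ := by module
  rw [ssign_cycle5, one_smul] at hchain
  have h2s : (2:F) • A.br (A.br w z) (A.br u (eps A f x y)) = 0 := by
    rw [two_smul]
    nth_rewrite 1 [hchain]
    exact neg_add_cancel _
  rcases smul_eq_zero.mp h2s with h | h
  · exact absurd h h2
  · exact h

lemma homog_ind (A : LieSuperAlg F L) (P : L → Prop) (h0 : P 0)
    (hadd : ∀ a b : L, P a → P b → P (a + b))
    (hmem : ∀ (i : ZMod 2), ∀ a ∈ A.G i, P a) : ∀ v : L, P v := by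
  intro v
  have hv : v ∈ ⨆ i, A.G i := by
    rw [A.isInternal.submodule_iSup_eq_top]; exact Submodule.mem_top
  exact Submodule.iSup_induction A.G (motive := P) hv hmem h0 hadd

lemma key_all (h2 : (2 : F) ≠ 0) (hf : IsSuperCommuting A f) :
    ∀ w z u x y : L, A.br (A.br w z) (A.br u (eps A f x y)) = 0 := by
  -- extend in y
  have k4 : ∀ {m k c i : ZMod 2} {w z u x : L}, w ∈ A.G m → z ∈ A.G k →
      u ∈ A.G c → x ∈ A.G i → ∀ y : L,
      A.br (A.br w z) (A.br u (eps A f x y)) = 0 := by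
    intro m k c i w z u x hw hz hu hx
    refine homog_ind A _ ?_ ?_ ?_
    · have : eps A f x 0 = 0 := by
        unfold eps
        rw [br_zero_right, f_zero hf, br_zero_right, sub_zero]
      rw [this, br_zero_right, br_zero_right]
    · intro a b ha hb
      have he : eps A f x (a + b) = eps A f x a + eps A f x b := by
        unfold eps
        rw [A.br_add_right, hf.map_add, hf.map_add, A.br_add_right]
        abel
      rw [he, A.br_add_right, A.br_add_right, ha, hb, add_zero]
    · intro jj y hy
      exact keyP h2 hf hw hz hu hx hy
  -- extend in x
  have k3 : ∀ {m k c : ZMod 2} {w z u : L}, w ∈ A.G m → z ∈ A.G k →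
      u ∈ A.G c → ∀ x y : L,
      A.br (A.br w z) (A.br u (eps A f x y)) = 0 := by
    intro m k c w z u hw hz hu
    refine homog_ind A (fun x => ∀ y : L, A.br (A.br w z) (A.br u (eps A f x y)) = 0) ?_ ?_ ?_
    · intro y
      have : eps A f 0 y = 0 := by
        unfold eps
        rw [br_zero_left, f_zero hf, br_zero_left, sub_zero]
      rw [this, br_zero_right, br_zero_right]
    · intro a b ha hb y
      have he : eps A f (a + b) y = eps A f a y + eps A f b y := by
        unfold eps
        rw [A.br_add_left, hf.map_add, A.br_add_left]
        abel
      rw [he, A.br_add_right, A.br_add_right, ha, hb, add_zero]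
    · intro ii x hx y
      exact k4 hw hz hu hx y
  -- extend in u
  have k2 : ∀ {m k : ZMod 2} {w z : L}, w ∈ A.G m → z ∈ A.G k →
      ∀ u x y : L, A.br (A.br w z) (A.br u (eps A f x y)) = 0 := by
    intro m k w z hw hz
    refine homog_ind A (fun u => ∀ x y : L, A.br (A.br w z) (A.br u (eps A f x y)) = 0) ?_ ?_ ?_
    · intro x y
      rw [br_zero_left, br_zero_right]
    · intro a b ha hb x y
      rw [A.br_add_left, A.br_add_right, ha, hb, add_zero]
    · intro cc u hu x y
      exact k3 hw hz hu x y
  -- extend in z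
  have k1 : ∀ {m : ZMod 2} {w : L}, w ∈ A.G m →
      ∀ z u x y : L, A.br (A.br w z) (A.br u (eps A f x y)) = 0 := by
    intro m w hw
    refine homog_ind A (fun z => ∀ u x y : L, A.br (A.br w z) (A.br u (eps A f x y)) = 0) ?_ ?_ ?_
    · intro u x y
      rw [br_zero_right, br_zero_left]
    · intro a b ha hb u x y
      rw [A.br_add_right, A.br_add_left, ha, hb, add_zero]
    · intro kk z hz u x y
      exact k2 hw hz u x y
  -- extend in w
  intro w
  refine homog_ind A (fun w => ∀ z u x y : L, A.br (A.br w z) (A.br u (eps A f x y)) = 0) ?_ ?_ ?_ w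
  · intro z u x y
    rw [br_zero_left, br_zero_left]
  · intro a b ha hb z u x y
    rw [A.br_add_left, A.br_add_left, ha, hb, add_zero]
  · intro mm w hw z u x y
    exact k1 hw z u x y


end Main

end Stmt9Aux

theorem stmt9 (h2 : (2 : F) ≠ 0) (A : LieSuperAlg F L) (f : L → L)
    (hf : IsSuperCommuting A f) :
    ∀ x y u w z : L,
      A.br (A.br w z) (A.br u (f (A.br x y) - A.br x (f y))) = 0 := by
  intro x y u w z
  exact Stmt9Aux.key_all h2 hf w z u x y
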